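/- Two LPMLN programs are q-strongly equivalent if and only if they are p-strongly equivalent. -/

import Mathlib

open scoped Classical

noncomputable section

namespace LPMLN

/-- A ground literal: an atom (numbered by `ℕ`) or its classical negation. -/
inductive Lit where
  | pos : ℕ → Lit
  | neg : ℕ → Lit
deriving DecidableEq

/-- The complementary literal. -/
def Lit.compl : Lit → Lit
  | .pos a => .neg a
  | .neg a => .pos a

/-- A finite set of literals is consistent if it contains no complementary pair. -/
def Consistent (I : Finset Lit) : Prop := ∀ l ∈ I, l.compl ∉ I

/-- An ASP rule, given by its head, positive body and negative body. -/
structure Rule where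
  head : Finset Lit
  pos : Finset Lit
  neg : Finset Lit
deriving DecidableEq

/-- The literals occurring in a rule. -/
def Rule.lits (r : Rule) : Finset Lit := r.head ∪ r.pos ∪ r.neg

/-- Satisfaction of a rule by a set of literals. -/
def Sat (I : Finset Lit) (r : Rule) : Prop :=
  r.pos ⊆ I → r.neg ∩ I = ∅ → (r.head ∩ I).Nonempty

/-- Satisfaction of an ASP program. -/
def SatProg (I : Finset Lit) (prog : Finset Rule) : Prop := ∀ r ∈ prog, Sat I r

/-- The GL-reduct of an ASP program w.r.t. an interpretation. -/
def glReduct (prog : Finset Rule) (I : Finset Lit) : Finset Rule :=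
  (prog.filter fun r => r.neg ∩ I = ∅).image fun r => ⟨r.head, r.pos, ∅⟩

/-- `I` is a stable model of the ASP program `prog`: `I` is a consistent set of
literals satisfying the GL-reduct, no proper subset of which satisfies the GL-reduct. -/
def AspStable (prog : Finset Rule) (I : Finset Lit) : Prop :=
  Consistent I ∧ SatProg I (glReduct prog I) ∧ ∀ J ⊂ I, ¬ SatProg J (glReduct prog I)

/-- A weight: a real number (soft rule) or the symbol `α` (hard rule). -/
inductive Weight where
  | soft : ℝ → Weight
  | hard : Weight

/-- The real value of a soft weight (hard weights get the dummy value 0). -/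
def Weight.val : Weight → ℝ
  | .soft w => w
  | .hard => 0

/-- A weighted rule `w : r`. -/
structure WRule where
  w : Weight
  r : Rule

/-- An LPMLN program: a finite set of weighted rules. -/
abbrev Program := Finset WRule

/-- The LPMLN reduct `P_I`: the rules of `P` satisfied by `I`. -/
def reduct (P : Program) (I : Finset Lit) : Program := P.filter fun wr => Sat I wr.r

/-- The unweighted ASP counterpart of an LPMLN program. -/
def unweighted (P : Program) : Finset Rule := P.image fun wr => wr.r

/-- `I` is a stable model of the LPMLN program `P`: `I` is a stable model of the
unweighted ASP counterpart of the LPMLN reduct `P_I`. -/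
def Stable (P : Program) (I : Finset Lit) : Prop :=
  AspStable (unweighted (reduct P I)) I

/-- The literals occurring in an LPMLN program. -/
def litset (P : Program) : Finset Lit := P.biUnion fun wr => wr.r.lits

/-- `(X, Y)` is an SE-interpretation: a pair of interpretations with `X ⊆ Y`. -/
def SEInterp (X Y : Finset Lit) : Prop := Consistent X ∧ Consistent Y ∧ X ⊆ Y

/-- `(X, Y)` is an SE-model of the LPMLN program `P`: an SE-interpretation such that
`X` satisfies the GL-reduct (w.r.t. `Y`) of the unweighted version of `P_Y`. -/
def SEModel (P : Program) (X Y : Finset Lit) : Prop :=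
  SEInterp X Y ∧ SatProg X (glReduct (unweighted (reduct P Y)) Y)

/-- The number of hard rules of `P` satisfied by `I`. -/
def hardCount (P : Program) (I : Finset Lit) : ℕ :=
  ((reduct P I).filter fun wr => wr.w = Weight.hard).card

/-- The sum of the weights of the soft rules of `P` satisfied by `I`. -/
def softWeight (P : Program) (I : Finset Lit) : ℝ :=
  ∑ wr ∈ ((reduct P I).filter fun wr => wr.w ≠ Weight.hard), wr.w.val

/-- The weight degree `W(P, I) = exp(Σ_{w:r ∈ P_I} w)`, viewed as the real-valued
function `A ↦ exp(c' + k'·A)` of the value `A` given to the symbol `α`, where `k'` is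
the number of hard rules of `P` satisfied by `I` and `c'` the sum of the weights of the
soft rules of `P` satisfied by `I`. -/
def wdeg (P : Program) (I : Finset Lit) (A : ℝ) : ℝ :=
  Real.exp (softWeight P I + A * hardCount P I)

/-- The (finite) set of stable models of `P` (every stable model of `P` is a subset of
`litset P`). -/
def SMset (P : Program) : Finset (Finset Lit) :=
  (litset P).powerset.filter fun I => Stable P I

/-- The probability degree `Pr(P, I)`: the limit, as `α → ∞`, of
`W(P, I) / Σ_{I' ∈ SM(P)} W(P, I')` if `I` is a stable model of `P`, and `0` otherwise. -/
def PrDeg (P : Program) (I : Finset Lit) : ℝ :=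
  if Stable P I then
    Filter.limUnder Filter.atTop fun A => wdeg P I A / ∑ I' ∈ SMset P, wdeg P I' A
  else 0

/-- `I` is a probabilistic stable model of `P`: a stable model of `P` satisfying the
maximum number of hard rules of `P` (equivalently, with nonzero probability degree). -/
def PStable (P : Program) (I : Finset Lit) : Prop :=
  Stable P I ∧ ∀ J, Stable P J → hardCount P J ≤ hardCount P I

/-- Semi-strong equivalence: the extensions by any LPMLN program have the same
stable models. -/
def SemiStrongEq (P Q : Program) : Prop :=
  ∀ R : Program, ∀ I, Stable (P ∪ R) I ↔ Stable (Q ∪ R) I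

/-- p-ordinary equivalence: same stable models and same probability degrees. -/
def POrdEq (P Q : Program) : Prop :=
  (∀ I, Stable P I ↔ Stable Q I) ∧ ∀ I, Stable P I → PrDeg P I = PrDeg Q I

/-- p-strong equivalence: p-ordinary equivalence under every extension. -/
def PStrongEq (P Q : Program) : Prop := ∀ R : Program, POrdEq (P ∪ R) (Q ∪ R)

/-- Comparison of the symbolic weight degrees of two interpretations w.r.t. `P`:
`exp(c + k·α) ≤ exp(c' + k'·α)` iff `k < k'`, or `k = k'` and `c ≤ c'`. -/
def WLe (P : Program) (I J : Finset Lit) : Prop :=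
  hardCount P I < hardCount P J ∨
    (hardCount P I = hardCount P J ∧ softWeight P I ≤ softWeight P J)

/-- q-strong equivalence: same stable models under every extension, with
order-preserving weight degrees. -/
def QStrongEq (P Q : Program) : Prop :=
  ∀ R : Program,
    (∀ I, Stable (P ∪ R) I ↔ Stable (Q ∪ R) I) ∧
    ∀ X Y, Stable (P ∪ R) X → Stable (P ∪ R) Y → (WLe (P ∪ R) X Y ↔ WLe (Q ∪ R) X Y)

/-- A soft stable model of `P`: a stable model of `P` satisfying all hard rules of `P`. -/
def SoftStable (P : Program) (I : Finset Lit) : Prop :=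
  Stable P I ∧ ∀ wr ∈ P, wr.w = Weight.hard → Sat I wr.r

/-- A soft SE-model of `P`: an SE-model `(X, Y)` of `P` such that `Y` satisfies all
hard rules of `P`. -/
def SoftSEModel (P : Program) (X Y : Finset Lit) : Prop :=
  SEModel P X Y ∧ ∀ wr ∈ P, wr.w = Weight.hard → Sat Y wr.r

/-- The (finite) set of soft stable models of `P`. -/
def SSMset (P : Program) : Finset (Finset Lit) :=
  (litset P).powerset.filter fun I => SoftStable P I

/-- The probability degree under the soft stable model semantics:
`Pr_s(P, X) = W_s(P, X) / Σ_{X' ∈ SSM(P)} W_s(P, X')`, where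
`W_s(P, X) = exp(Σ_{w:r ∈ P^s, X ⊨ r} w)`. -/
def PrS (P : Program) (X : Finset Lit) : ℝ :=
  Real.exp (softWeight P X) / ∑ X' ∈ SSMset P, Real.exp (softWeight P X')

/-- sp-strong equivalence: p-strong equivalence under the soft stable model
semantics. -/
def SPStrongEq (P Q : Program) : Prop :=
  ∀ R : Program,
    (∀ I, SoftStable (P ∪ R) I ↔ SoftStable (Q ∪ R) I) ∧
    ∀ X, SoftStable (P ∪ R) X → PrS (P ∪ R) X = PrS (Q ∪ R) X

/-- `(X, Y)` is a UE-model of `P`: an SE-model with `X = Y`, or with `X ⊊ Y` such that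
no `X'` strictly between `X` and `Y` gives an SE-model `(X', Y)`. -/
def UEModel (P : Program) (X Y : Finset Lit) : Prop :=
  SEModel P X Y ∧
    (X = Y ∨ (X ⊂ Y ∧ ∀ X', X ⊂ X' → X' ⊂ Y → ¬ SEModel P X' Y))

/-- A program consisting of weighted facts only (rules with empty bodies). -/
def IsFactProg (R : Program) : Prop := ∀ wr ∈ R, wr.r.pos = ∅ ∧ wr.r.neg = ∅

/-- p-uniform equivalence: p-ordinary equivalence under every extension by a set of
weighted facts. -/
def PUniformEq (P Q : Program) : Prop :=
  ∀ R : Program, IsFactProg R → POrdEq (P ∪ R) (Q ∪ R)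

/-- The flattening rules `R(X, Y, a)`: the two hard rules
`α : ← X, not Y, a` and `α : a ← X, not Y`. -/
def flatten (X Y : Finset Lit) (a : ℕ) : Program :=
  {⟨Weight.hard, ⟨∅, X ∪ {Lit.pos a}, Y⟩⟩, ⟨Weight.hard, ⟨{Lit.pos a}, X, Y⟩⟩}

/-- The hard fact `α : l`. -/
def factOf (l : Lit) : WRule := ⟨Weight.hard, ⟨{l}, ∅, ∅⟩⟩

/-- The base flattening extension `E⁰(P, U) = P ∪ {α : a | a ∈ U}`. -/
def E0 (P : Program) (U : Finset Lit) : Program := P ∪ U.image factOf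

/-- `IsFlatExt P U k E` holds iff `E` is a flattening extension `E^k(P, U)`:
`E⁰(P, U) = P ∪ {α : a | a ∈ U}` and `E^{i+1}(P, U) = E^i(P, U) ∪ R(X ∩ U, U − X, c)`
where `X` is a probabilistic stable model of `E^i(P, U)` and `c` is a fresh atom. -/
inductive IsFlatExt (P : Program) (U : Finset Lit) : ℕ → Program → Prop
  | zero : IsFlatExt P U 0 (E0 P U)
  | succ {i : ℕ} {E : Program} {X : Finset Lit} {c : ℕ} :
      IsFlatExt P U i E → PStable E X →
      Lit.pos c ∉ litset E → Lit.neg c ∉ litset E →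
      IsFlatExt P U (i + 1) (E ∪ flatten (X ∩ U) (U \ X) c)

/-! ### Auxiliary machinery for the main theorem -/

section Aux

lemma sat_of_empty_head {I : Finset Lit} {r : Rule} (h : r.head = ∅) :
    Sat I r ↔ ¬(r.pos ⊆ I ∧ r.neg ∩ I = ∅) := by
  unfold Sat
  constructor
  · intro hs hc
    have := hs hc.1 hc.2
    rw [h] at this
    simp at this
  · intro hs h1 h2
    exact (hs ⟨h1, h2⟩).elim

lemma reduct_union (S T : Program) (I : Finset Lit) :
    reduct (S ∪ T) I = reduct S I ∪ reduct T I := by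
  unfold reduct; exact Finset.filter_union _ _ _

lemma unweighted_union (S T : Program) :
    unweighted (S ∪ T) = unweighted S ∪ unweighted T := by
  unfold unweighted; exact Finset.image_union _ _

lemma glReduct_union (A B : Finset Rule) (I : Finset Lit) :
    glReduct (A ∪ B) I = glReduct A I ∪ glReduct B I := by
  unfold glReduct; rw [Finset.filter_union, Finset.image_union]

lemma satProg_union {I : Finset Lit} {A B : Finset Rule} :
    SatProg I (A ∪ B) ↔ SatProg I A ∧ SatProg I B := by
  unfold SatProg
  simp only [Finset.mem_union, or_imp, forall_and]

lemma mem_glReduct {g : Rule} {prog : Finset Rule} {I : Finset Lit} :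
    g ∈ glReduct prog I ↔ ∃ r ∈ prog, r.neg ∩ I = ∅ ∧ g = ⟨r.head, r.pos, ∅⟩ := by
  unfold glReduct
  simp only [Finset.mem_image, Finset.mem_filter]
  constructor
  · rintro ⟨r, ⟨h1, h2⟩, rfl⟩; exact ⟨r, h1, h2, rfl⟩
  · rintro ⟨r, h1, h2, rfl⟩; exact ⟨r, ⟨h1, h2⟩, rfl⟩

lemma mem_unweighted_reduct {r : Rule} {S : Program} {I : Finset Lit} :
    r ∈ unweighted (reduct S I) ↔ ∃ wr ∈ S, Sat I wr.r ∧ wr.r = r := by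
  unfold unweighted reduct
  simp only [Finset.mem_image, Finset.mem_filter]
  constructor
  · rintro ⟨wr, ⟨h1, h2⟩, rfl⟩; exact ⟨wr, h1, h2, rfl⟩
  · rintro ⟨wr, h1, h2, rfl⟩; exact ⟨wr, ⟨h1, h2⟩, rfl⟩

lemma stable_union_singleton {S : Program} {wr : WRule} (hh : wr.r.head = ∅)
    (I : Finset Lit) : Stable (S ∪ {wr}) I ↔ Stable S I := by
  have key : ∀ J ⊆ I, SatProg J (glReduct (unweighted (reduct {wr} I)) I) := by
    intro J hJ g hg
    rw [mem_glReduct] at hg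
    obtain ⟨r, hr, hneg, rfl⟩ := hg
    rw [mem_unweighted_reduct] at hr
    obtain ⟨wr', hw1, hw2, rfl⟩ := hr
    rw [Finset.mem_singleton] at hw1
    subst hw1
    rw [sat_of_empty_head hh] at hw2
    intro hpos _
    exact (hw2 ⟨hpos.trans hJ, hneg⟩).elim
  have hsplit : glReduct (unweighted (reduct (S ∪ {wr}) I)) I
      = glReduct (unweighted (reduct S I)) I ∪ glReduct (unweighted (reduct {wr} I)) I := by
    rw [reduct_union, unweighted_union, glReduct_union]
  unfold Stable AspStable
  rw [hsplit]
  constructor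
  · rintro ⟨hC, hS, hmin⟩
    refine ⟨hC, (satProg_union.1 hS).1, fun J hJ hSP => hmin J hJ ?_⟩
    exact satProg_union.2 ⟨hSP, key J hJ.subset⟩
  · rintro ⟨hC, hS, hmin⟩
    exact ⟨hC, satProg_union.2 ⟨hS, key I (Finset.Subset.refl I)⟩,
      fun J hJ hSP => hmin J hJ (satProg_union.1 hSP).1⟩

lemma stable_union_emptyHeads {S : Program} (E : Program) (I : Finset Lit) :
    (∀ wr ∈ E, wr.r.head = ∅) → (Stable (S ∪ E) I ↔ Stable S I) := by
  induction E using Finset.induction_on with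
  | empty => intro _; rw [Finset.union_empty]
  | @insert a E' ha ih =>
    intro hE
    have h1 : S ∪ insert a E' = (S ∪ E') ∪ {a} := by
      ext x; simp only [Finset.mem_union, Finset.mem_insert, Finset.mem_singleton]; tauto
    rw [h1, stable_union_singleton (hE a (Finset.mem_insert_self a E')) I]
    exact ih (fun wr hw => hE wr (Finset.mem_insert_of_mem hw))

lemma stable_subset_litset {S : Program} {I : Finset Lit} (h : Stable S I) :
    I ⊆ litset S := by
  obtain ⟨hC, hS, hmin⟩ := h
  by_contra hns
  have hJ : I ∩ litset S ⊂ I := by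
    refine ⟨Finset.inter_subset_left, fun hsub => hns fun x hx => ?_⟩
    exact (Finset.mem_inter.1 (hsub hx)).2
  refine hmin _ hJ ?_
  intro g hg
  have hgI := hS g hg
  rw [mem_glReduct] at hg
  obtain ⟨r, hr, hneg, rfl⟩ := hg
  intro hpos _
  have h1 : r.pos ⊆ I := hpos.trans Finset.inter_subset_left
  have h2 : (r.head ∩ I).Nonempty := hgI h1 (by simp)
  obtain ⟨e, he⟩ := h2
  rw [Finset.mem_inter] at he
  rw [mem_unweighted_reduct] at hr
  obtain ⟨wr, hwS, -, rfl⟩ := hr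
  have heL : e ∈ litset S := by
    rw [litset, Finset.mem_biUnion]
    refine ⟨wr, hwS, ?_⟩
    unfold Rule.lits
    exact Finset.mem_union_left _ (Finset.mem_union_left _ he.1)
  exact ⟨e, Finset.mem_inter.2 ⟨he.1, Finset.mem_inter.2 ⟨he.2, heL⟩⟩⟩

lemma mem_SMset {S : Program} {I : Finset Lit} : I ∈ SMset S ↔ Stable S I := by
  unfold SMset
  rw [Finset.mem_filter, Finset.mem_powerset]
  exact ⟨fun h => h.2, fun h => ⟨stable_subset_litset h, h⟩⟩

lemma hardCount_union_of_disjoint {S E : Program} (h : Disjoint S E) (I : Finset Lit) :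
    hardCount (S ∪ E) I = hardCount S I + hardCount E I := by
  unfold hardCount
  rw [reduct_union, Finset.filter_union, Finset.card_union_of_disjoint]
  exact Disjoint.mono ((Finset.filter_subset _ _).trans (Finset.filter_subset _ _))
    ((Finset.filter_subset _ _).trans (Finset.filter_subset _ _)) h

lemma softWeight_union_of_disjoint {S E : Program} (h : Disjoint S E) (I : Finset Lit) :
    softWeight (S ∪ E) I = softWeight S I + softWeight E I := by
  unfold softWeight
  rw [reduct_union, Finset.filter_union, Finset.sum_union]
  exact Disjoint.mono ((Finset.filter_subset _ _).trans (Finset.filter_subset _ _))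
    ((Finset.filter_subset _ _).trans (Finset.filter_subset _ _)) h

lemma hardCount_union_soft {S E : Program} (hE : ∀ wr ∈ E, wr.w ≠ Weight.hard)
    (I : Finset Lit) : hardCount (S ∪ E) I = hardCount S I := by
  unfold hardCount
  rw [reduct_union, Finset.filter_union]
  have he : (reduct E I).filter (fun wr => wr.w = Weight.hard) = ∅ := by
    rw [Finset.filter_eq_empty_iff]
    intro wr hwr
    exact hE wr (Finset.filter_subset _ _ hwr)
  rw [he, Finset.union_empty]

lemma softWeight_union_hard {S E : Program} (hE : ∀ wr ∈ E, wr.w = Weight.hard)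
    (I : Finset Lit) : softWeight (S ∪ E) I = softWeight S I := by
  unfold softWeight
  rw [reduct_union, Finset.filter_union]
  have he : (reduct E I).filter (fun wr => wr.w ≠ Weight.hard) = ∅ := by
    rw [Finset.filter_eq_empty_iff]
    intro wr hwr
    simp only [ne_eq, not_not]
    exact hE wr (Finset.filter_subset _ _ hwr)
  rw [he, Finset.union_empty]

lemma softWeight_singleton (w : ℝ) (r : Rule) (I : Finset Lit) :
    softWeight {(⟨Weight.soft w, r⟩ : WRule)} I = if Sat I r then w else 0 := by
  unfold softWeight reduct
  rw [Finset.filter_singleton]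
  by_cases h : Sat I r
  · rw [if_pos h, Finset.filter_singleton, if_pos (by simp), Finset.sum_singleton, if_pos h]
    rfl
  · rw [if_neg h, if_neg h]
    simp

lemma hardCount_le_card (S : Program) (I : Finset Lit) : hardCount S I ≤ S.card :=
  Finset.card_le_card ((Finset.filter_subset _ _).trans (Finset.filter_subset _ _))

/-- The maximal number of satisfied hard rules over the stable models. -/
def HmaxD (S : Program) : ℕ := ((SMset S).image (hardCount S)).max.getD 0

lemma exists_HmaxD {S : Program} (h : (SMset S).Nonempty) :
    ∃ J ∈ SMset S, hardCount S J = HmaxD S := by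
  obtain ⟨m, hm⟩ := Finset.max_of_nonempty (h.image (hardCount S))
  obtain ⟨J, hJ, hJm⟩ := Finset.mem_image.1 (Finset.mem_of_max hm)
  refine ⟨J, hJ, ?_⟩
  rw [hJm]
  unfold HmaxD
  rw [hm]
  rfl

lemma le_HmaxD {S : Program} {I : Finset Lit} (hI : I ∈ SMset S) :
    hardCount S I ≤ HmaxD S := by
  have h1 : hardCount S I ∈ (SMset S).image (hardCount S) := Finset.mem_image_of_mem _ hI
  obtain ⟨m, hm⟩ := Finset.max_of_mem h1
  have h2 := Finset.le_max h1
  rw [hm] at h2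
  have h3 : hardCount S I ≤ m := by exact_mod_cast h2
  unfold HmaxD
  rw [hm]
  exact h3

lemma prdeg_formula (S : Program) (I : Finset Lit) (hI : Stable S I) :
    PrDeg S I =
      if hardCount S I = HmaxD S then
        Real.exp (softWeight S I) /
          ∑ J ∈ (SMset S).filter (fun J => hardCount S J = HmaxD S),
            Real.exp (softWeight S J)
      else 0 := by
  have hIS : I ∈ SMset S := mem_SMset.2 hI
  set M : ℕ := HmaxD S with hM
  set g : Finset Lit → ℝ → ℝ :=
    fun J A => Real.exp (softWeight S J + A * ((hardCount S J : ℝ) - M)) with hg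
  have hterm : ∀ J ∈ SMset S, Filter.Tendsto (g J) Filter.atTop
      (nhds (if hardCount S J = M then Real.exp (softWeight S J) else 0)) := by
    intro J hJ
    by_cases hJM : hardCount S J = M
    · rw [if_pos hJM]
      have hconst : g J = fun _ => Real.exp (softWeight S J) := by
        funext A; rw [hg]; simp [hJM]
      rw [hconst]; exact tendsto_const_nhds
    · rw [if_neg hJM]
      have hlt : ((hardCount S J : ℝ) - M) < 0 := by
        have h1 : hardCount S J ≤ M := le_HmaxD hJ
        have h2 : hardCount S J < M := lt_of_le_of_ne h1 hJM
        have h3 : (hardCount S J : ℝ) < M := by exact_mod_cast h2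
        linarith
      have h3 : Filter.Tendsto (fun A : ℝ => A * ((hardCount S J : ℝ) - M))
          Filter.atTop Filter.atBot := Filter.tendsto_id.atTop_mul_const_of_neg hlt
      have h4 : Filter.Tendsto (fun A : ℝ => softWeight S J + A * ((hardCount S J : ℝ) - M))
          Filter.atTop Filter.atBot := Filter.tendsto_atBot_add_const_left _ _ h3
      exact Real.tendsto_exp_atBot.comp h4
  have hden : Filter.Tendsto (fun A => ∑ J ∈ SMset S, g J A) Filter.atTop
      (nhds (∑ J ∈ SMset S, if hardCount S J = M then Real.exp (softWeight S J) else 0)) :=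
    tendsto_finset_sum _ hterm
  have hDsum : (∑ J ∈ SMset S, if hardCount S J = M then Real.exp (softWeight S J) else 0)
      = ∑ J ∈ (SMset S).filter (fun J => hardCount S J = M), Real.exp (softWeight S J) :=
    (Finset.sum_filter _ _).symm
  have hDpos : 0 < ∑ J ∈ (SMset S).filter (fun J => hardCount S J = M),
      Real.exp (softWeight S J) := by
    obtain ⟨J, hJ, hJm⟩ := exists_HmaxD ⟨I, hIS⟩
    exact Finset.sum_pos (fun _ _ => Real.exp_pos _) ⟨J, Finset.mem_filter.2 ⟨hJ, hJm⟩⟩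
  rw [hDsum] at hden
  have heqf : ∀ A : ℝ, g I A / ∑ J ∈ SMset S, g J A
      = wdeg S I A / ∑ J ∈ SMset S, wdeg S J A := by
    intro A
    have hw : ∀ J, wdeg S J A = g J A * Real.exp (A * M) := by
      intro J
      rw [hg, wdeg, ← Real.exp_add]
      congr 1
      ring
    rw [hw I, Finset.sum_congr rfl (fun J _ => hw J), ← Finset.sum_mul,
      mul_div_mul_right _ _ (Real.exp_ne_zero _)]
  have hratio : Filter.Tendsto (fun A => wdeg S I A / ∑ J ∈ SMset S, wdeg S J A)
      Filter.atTop (nhds ((if hardCount S I = M then Real.exp (softWeight S I) else 0) /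
        ∑ J ∈ (SMset S).filter (fun J => hardCount S J = M), Real.exp (softWeight S J))) := by
    refine Filter.Tendsto.congr heqf ?_
    exact Filter.Tendsto.div (hterm I hIS) hden hDpos.ne'
  unfold PrDeg
  rw [if_pos hI, hratio.limUnder_eq]
  by_cases hc : hardCount S I = M
  · rw [if_pos hc, if_pos hc]
  · rw [if_neg hc, if_neg hc, zero_div]

lemma prdeg_pos_iff (S : Program) (I : Finset Lit) (hI : Stable S I) :
    (0 < PrDeg S I ↔ hardCount S I = HmaxD S) := by
  rw [prdeg_formula S I hI]
  by_cases h : hardCount S I = HmaxD S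
  · rw [if_pos h]
    refine ⟨fun _ => h, fun _ => ?_⟩
    apply div_pos (Real.exp_pos _)
    obtain ⟨J, hJ, hJm⟩ := exists_HmaxD ⟨I, mem_SMset.2 hI⟩
    exact Finset.sum_pos (fun _ _ => Real.exp_pos _) ⟨J, Finset.mem_filter.2 ⟨hJ, hJm⟩⟩
  · rw [if_neg h]
    simp [h]

/-- The pivotal structural condition. -/
def CondEq (P Q : Program) : Prop :=
  ∀ R : Program,
    (∀ I, Stable (P ∪ R) I ↔ Stable (Q ∪ R) I) ∧
    ∀ X Y, Stable (P ∪ R) X → Stable (P ∪ R) Y →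
      ((hardCount (P ∪ R) X < hardCount (P ∪ R) Y ↔
          hardCount (Q ∪ R) X < hardCount (Q ∪ R) Y) ∧
       (hardCount (P ∪ R) X = hardCount (P ∪ R) Y →
          softWeight (P ∪ R) X - softWeight (P ∪ R) Y =
            softWeight (Q ∪ R) X - softWeight (Q ∪ R) Y))

lemma arith_key (Bad : Finset ℝ) :
    ∀ (a a' : ℤ) (b b' : ℝ),
      (∀ t : ℝ, t ∉ Bad →
        ((a < 0 ∨ (a = 0 ∧ b + t ≤ 0)) ↔ (a' < 0 ∨ (a' = 0 ∧ b' + t ≤ 0)))) →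
      ((a < 0 ↔ a' < 0) ∧ (a = 0 → a' = 0 ∧ b = b')) := by
  have step : ∀ (a a' : ℤ) (b b' : ℝ),
      (∀ t : ℝ, t ∉ Bad →
        ((a < 0 ∨ (a = 0 ∧ b + t ≤ 0)) ↔ (a' < 0 ∨ (a' = 0 ∧ b' + t ≤ 0)))) →
      a < 0 → a' < 0 := by
    intro a a' b b' H ha
    by_contra hna
    obtain ⟨t, ht1, ht2⟩ := (Set.Ioi_infinite (-b')).exists_notMem_finset Bad
    rcases (H t ht2).1 (Or.inl ha) with h1 | ⟨h2, h3⟩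
    · exact hna h1
    · rw [Set.mem_Ioi] at ht1; linarith
  intro a a' b b' H
  have H' := fun t ht => (H t ht).symm
  have hiff : a < 0 ↔ a' < 0 := ⟨step a a' b b' H, step a' a b' b H'⟩
  refine ⟨hiff, ?_⟩
  intro ha0
  have hna : ¬ a < 0 := by omega
  have hna' : ¬ a' < 0 := fun hc => hna (hiff.2 hc)
  have ha'0 : a' = 0 := by
    by_contra h0
    obtain ⟨t, ht1, ht2⟩ := (Set.Iio_infinite (-b)).exists_notMem_finset Bad
    rw [Set.mem_Iio] at ht1
    rcases (H t ht2).1 (Or.inr ⟨ha0, by linarith⟩) with h1 | ⟨h2, h3⟩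
    · exact hna' h1
    · exact h0 h2
  refine ⟨ha'0, ?_⟩
  by_contra hbb
  rcases lt_or_gt_of_ne hbb with hlt | hgt
  · obtain ⟨t, ht1, ht2⟩ :=
      (Set.Ioc_infinite (by linarith : -b' < -b)).exists_notMem_finset Bad
    rw [Set.mem_Ioc] at ht1
    rcases (H t ht2).1 (Or.inr ⟨ha0, by linarith [ht1.2]⟩) with h1 | ⟨h2, h3⟩
    · exact hna' h1
    · linarith [ht1.1]
  · obtain ⟨t, ht1, ht2⟩ :=
      (Set.Ioc_infinite (by linarith : -b < -b')).exists_notMem_finset Bad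
    rw [Set.mem_Ioc] at ht1
    rcases (H t ht2).2 (Or.inr ⟨ha'0, by linarith [ht1.2]⟩) with h1 | ⟨h2, h3⟩
    · exact hna h1
    · linarith [ht1.1]

end Aux

section Aux2

lemma cond_of_q {P Q : Program} (h : QStrongEq P Q) : CondEq P Q := by
  intro R
  refine ⟨(h R).1, ?_⟩
  intro X Y hX hY
  by_cases hXY : X = Y
  · subst hXY
    exact ⟨by omega, fun _ => by ring⟩
  have hex : ∃ l, (l ∈ X ∧ l ∉ Y) ∨ (l ∈ Y ∧ l ∉ X) := by
    by_contra hc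
    push_neg at hc
    exact hXY (Finset.ext fun l => ⟨fun hl => (hc l).1 hl, fun hl => (hc l).2 hl⟩)
  obtain ⟨l, hl⟩ := hex
  have hsat₀ : ∀ I : Finset Lit, Sat I (⟨∅, ∅, {l}⟩ : Rule) ↔ l ∈ I := by
    intro I
    rw [sat_of_empty_head rfl]
    constructor
    · intro hns
      by_contra hn
      exact hns ⟨Finset.empty_subset I, Finset.singleton_inter_of_notMem hn⟩
    · rintro hlI ⟨-, hint⟩
      have hmem : l ∈ ({l} : Finset Lit) ∩ I :=
        Finset.mem_inter.2 ⟨Finset.mem_singleton_self l, hlI⟩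
      rw [hint] at hmem
      exact Finset.notMem_empty l hmem
  classical
  set Bad : Finset ℝ := (P ∪ Q ∪ R).image (fun wr => wr.w.val) with hBad
  have hkey : ∀ (S : Program), S ⊆ P ∪ Q ∪ R → ∀ w : ℝ, w ∉ Bad → ∀ I : Finset Lit,
      hardCount (S ∪ {(⟨Weight.soft w, ⟨∅, ∅, {l}⟩⟩ : WRule)}) I = hardCount S I ∧
      softWeight (S ∪ {(⟨Weight.soft w, ⟨∅, ∅, {l}⟩⟩ : WRule)}) I
        = softWeight S I + (if l ∈ I then w else 0) := by
    intro S hS w hw I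
    have hnot : (⟨Weight.soft w, ⟨∅, ∅, {l}⟩⟩ : WRule) ∉ S := by
      intro hc
      exact hw (Finset.mem_image_of_mem (fun wr => wr.w.val) (hS hc))
    have hdisj : Disjoint S {(⟨Weight.soft w, ⟨∅, ∅, {l}⟩⟩ : WRule)} :=
      Finset.disjoint_singleton_right.2 hnot
    constructor
    · refine hardCount_union_soft (fun wr hwr => ?_) I
      rw [Finset.mem_singleton] at hwr
      subst hwr
      simp
    · rw [softWeight_union_of_disjoint hdisj]
      rw [softWeight_singleton]
      by_cases hli : l ∈ I
      · rw [if_pos ((hsat₀ I).2 hli), if_pos hli]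
      · rw [if_neg (fun hc => hli ((hsat₀ I).1 hc)), if_neg hli]
  have kP : P ∪ R ⊆ P ∪ Q ∪ R :=
    Finset.union_subset_union Finset.subset_union_left (Finset.Subset.refl R)
  have kQ : Q ∪ R ⊆ P ∪ Q ∪ R :=
    Finset.union_subset_union Finset.subset_union_right (Finset.Subset.refl R)
  have main : ∀ w : ℝ, w ∉ Bad →
      ((hardCount (P ∪ R) X < hardCount (P ∪ R) Y ∨
         (hardCount (P ∪ R) X = hardCount (P ∪ R) Y ∧
          softWeight (P ∪ R) X + (if l ∈ X then w else 0)
            ≤ softWeight (P ∪ R) Y + (if l ∈ Y then w else 0))) ↔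
       (hardCount (Q ∪ R) X < hardCount (Q ∪ R) Y ∨
         (hardCount (Q ∪ R) X = hardCount (Q ∪ R) Y ∧
          softWeight (Q ∪ R) X + (if l ∈ X then w else 0)
            ≤ softWeight (Q ∪ R) Y + (if l ∈ Y then w else 0)))) := by
    intro w hw
    have eP : P ∪ (R ∪ {(⟨Weight.soft w, ⟨∅, ∅, {l}⟩⟩ : WRule)})
        = (P ∪ R) ∪ {(⟨Weight.soft w, ⟨∅, ∅, {l}⟩⟩ : WRule)} := (Finset.union_assoc _ _ _).symm
    have eQ : Q ∪ (R ∪ {(⟨Weight.soft w, ⟨∅, ∅, {l}⟩⟩ : WRule)})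
        = (Q ∪ R) ∪ {(⟨Weight.soft w, ⟨∅, ∅, {l}⟩⟩ : WRule)} := (Finset.union_assoc _ _ _).symm
    have hsX : Stable (P ∪ (R ∪ {(⟨Weight.soft w, ⟨∅, ∅, {l}⟩⟩ : WRule)})) X := by
      rw [eP]
      exact (stable_union_singleton rfl X).2 hX
    have hsY : Stable (P ∪ (R ∪ {(⟨Weight.soft w, ⟨∅, ∅, {l}⟩⟩ : WRule)})) Y := by
      rw [eP]
      exact (stable_union_singleton rfl Y).2 hY
    have hiff := (h (R ∪ {(⟨Weight.soft w, ⟨∅, ∅, {l}⟩⟩ : WRule)})).2 X Y hsX hsY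
    rw [eP, eQ] at hiff
    unfold WLe at hiff
    rw [(hkey _ kP w hw X).1, (hkey _ kP w hw Y).1, (hkey _ kP w hw X).2, (hkey _ kP w hw Y).2,
      (hkey _ kQ w hw X).1, (hkey _ kQ w hw Y).1, (hkey _ kQ w hw X).2,
      (hkey _ kQ w hw Y).2] at hiff
    exact hiff
  rcases hl with ⟨hlX, hlY⟩ | ⟨hlY, hlX⟩
  · have H : ∀ t : ℝ, t ∉ Bad →
        ((((hardCount (P ∪ R) X : ℤ) - hardCount (P ∪ R) Y) < 0 ∨
          (((hardCount (P ∪ R) X : ℤ) - hardCount (P ∪ R) Y) = 0 ∧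
            (softWeight (P ∪ R) X - softWeight (P ∪ R) Y) + t ≤ 0)) ↔
         (((hardCount (Q ∪ R) X : ℤ) - hardCount (Q ∪ R) Y) < 0 ∨
          (((hardCount (Q ∪ R) X : ℤ) - hardCount (Q ∪ R) Y) = 0 ∧
            (softWeight (Q ∪ R) X - softWeight (Q ∪ R) Y) + t ≤ 0))) := by
      intro t ht
      have hm := main t ht
      rw [if_pos hlX, if_neg hlY] at hm
      constructor
      · rintro (h1 | ⟨h1, h2⟩)
        · rcases hm.1 (Or.inl (by omega)) with h3 | ⟨h3, h4⟩
          · exact Or.inl (by omega)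
          · exact Or.inr ⟨by omega, by linarith⟩
        · rcases hm.1 (Or.inr ⟨by omega, by linarith⟩) with h3 | ⟨h3, h4⟩
          · exact Or.inl (by omega)
          · exact Or.inr ⟨by omega, by linarith⟩
      · rintro (h1 | ⟨h1, h2⟩)
        · rcases hm.2 (Or.inl (by omega)) with h3 | ⟨h3, h4⟩
          · exact Or.inl (by omega)
          · exact Or.inr ⟨by omega, by linarith⟩
        · rcases hm.2 (Or.inr ⟨by omega, by linarith⟩) with h3 | ⟨h3, h4⟩
          · exact Or.inl (by omega)
          · exact Or.inr ⟨by omega, by linarith⟩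
    obtain ⟨h1, h2⟩ := arith_key Bad _ _ _ _ H
    constructor
    · constructor
      · intro hlt
        have := h1.1 (by omega)
        omega
      · intro hlt
        have := h1.2 (by omega)
        omega
    · intro heq
      obtain ⟨-, hb⟩ := h2 (by omega)
      linarith
  · set Bad' : Finset ℝ := Bad.image (fun x => -x) with hBad'
    have H : ∀ t : ℝ, t ∉ Bad' →
        ((((hardCount (P ∪ R) X : ℤ) - hardCount (P ∪ R) Y) < 0 ∨
          (((hardCount (P ∪ R) X : ℤ) - hardCount (P ∪ R) Y) = 0 ∧
            (softWeight (P ∪ R) X - softWeight (P ∪ R) Y) + t ≤ 0)) ↔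
         (((hardCount (Q ∪ R) X : ℤ) - hardCount (Q ∪ R) Y) < 0 ∨
          (((hardCount (Q ∪ R) X : ℤ) - hardCount (Q ∪ R) Y) = 0 ∧
            (softWeight (Q ∪ R) X - softWeight (Q ∪ R) Y) + t ≤ 0))) := by
      intro t ht
      have hwB : -t ∉ Bad := by
        intro hc
        apply ht
        rw [hBad']
        simpa using Finset.mem_image_of_mem (fun x => -x) hc
      have hm := main (-t) hwB
      rw [if_neg hlX, if_pos hlY] at hm
      constructor
      · rintro (h1 | ⟨h1, h2⟩)
        · rcases hm.1 (Or.inl (by omega)) with h3 | ⟨h3, h4⟩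
          · exact Or.inl (by omega)
          · exact Or.inr ⟨by omega, by linarith⟩
        · rcases hm.1 (Or.inr ⟨by omega, by linarith⟩) with h3 | ⟨h3, h4⟩
          · exact Or.inl (by omega)
          · exact Or.inr ⟨by omega, by linarith⟩
      · rintro (h1 | ⟨h1, h2⟩)
        · rcases hm.2 (Or.inl (by omega)) with h3 | ⟨h3, h4⟩
          · exact Or.inl (by omega)
          · exact Or.inr ⟨by omega, by linarith⟩
        · rcases hm.2 (Or.inr ⟨by omega, by linarith⟩) with h3 | ⟨h3, h4⟩
          · exact Or.inl (by omega)
          · exact Or.inr ⟨by omega, by linarith⟩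
    obtain ⟨h1, h2⟩ := arith_key Bad' _ _ _ _ H
    constructor
    · constructor
      · intro hlt
        have := h1.1 (by omega)
        omega
      · intro hlt
        have := h1.2 (by omega)
        omega
    · intro heq
      obtain ⟨-, hb⟩ := h2 (by omega)
      linarith

lemma q_of_cond {P Q : Program} (h : CondEq P Q) : QStrongEq P Q := by
  intro R
  obtain ⟨h1, h2⟩ := h R
  refine ⟨h1, ?_⟩
  intro X Y hX hY
  obtain ⟨ha, hb⟩ := h2 X Y hX hY
  obtain ⟨ha', hb'⟩ := h2 Y X hY hX
  unfold WLe
  constructor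
  · rintro (hlt | ⟨heq, hle⟩)
    · exact Or.inl (ha.1 hlt)
    · have e1 : ¬ hardCount (Q ∪ R) X < hardCount (Q ∪ R) Y := fun hc => by
        have := ha.2 hc; omega
      have e2 : ¬ hardCount (Q ∪ R) Y < hardCount (Q ∪ R) X := fun hc => by
        have := ha'.2 hc; omega
      refine Or.inr ⟨by omega, ?_⟩
      have := hb heq
      linarith
  · rintro (hlt | ⟨heq, hle⟩)
    · exact Or.inl (ha.2 hlt)
    · have e1 : ¬ hardCount (P ∪ R) X < hardCount (P ∪ R) Y := fun hc => by
        have := ha.1 hc; omega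
      have e2 : ¬ hardCount (P ∪ R) Y < hardCount (P ∪ R) X := fun hc => by
        have := ha'.1 hc; omega
      have heqP : hardCount (P ∪ R) X = hardCount (P ∪ R) Y := by omega
      refine Or.inr ⟨heqP, ?_⟩
      have := hb heqP
      linarith

lemma p_of_cond {P Q : Program} (h : CondEq P Q) : PStrongEq P Q := by
  intro R
  obtain ⟨h1, h2⟩ := h R
  refine ⟨h1, ?_⟩
  intro X hX
  have hXQ : Stable (Q ∪ R) X := (h1 X).1 hX
  have hSM : SMset (Q ∪ R) = SMset (P ∪ R) := by
    ext I; rw [mem_SMset, mem_SMset]; exact (h1 I).symm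
  have hle_iff : ∀ J W, Stable (P ∪ R) J → Stable (P ∪ R) W →
      (hardCount (P ∪ R) W ≤ hardCount (P ∪ R) J ↔
        hardCount (Q ∪ R) W ≤ hardCount (Q ∪ R) J) := by
    intro J W hJ hW
    have hJW := (h2 J W hJ hW).1
    constructor
    · intro hle
      by_contra hc
      push_neg at hc
      have := hJW.2 hc
      omega
    · intro hle
      by_contra hc
      push_neg at hc
      have := hJW.1 hc
      omega
  have hmax_iff : ∀ J, Stable (P ∪ R) J →
      (hardCount (P ∪ R) J = HmaxD (P ∪ R) ↔ hardCount (Q ∪ R) J = HmaxD (Q ∪ R)) := by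
    intro J hJ
    constructor
    · intro hm
      have hQle : hardCount (Q ∪ R) J ≤ HmaxD (Q ∪ R) :=
        le_HmaxD (mem_SMset.2 ((h1 J).1 hJ))
      obtain ⟨W, hW, hWm⟩ := exists_HmaxD (S := Q ∪ R) ⟨X, mem_SMset.2 hXQ⟩
      have hWP : Stable (P ∪ R) W := (h1 W).2 (mem_SMset.1 hW)
      have h3 : hardCount (P ∪ R) W ≤ hardCount (P ∪ R) J := by
        rw [hm]; exact le_HmaxD (mem_SMset.2 hWP)
      have h4 := (hle_iff J W hJ hWP).1 h3
      omega
    · intro hm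
      obtain ⟨W, hW, hWm⟩ := exists_HmaxD (S := P ∪ R) ⟨X, mem_SMset.2 hX⟩
      have hWP : Stable (P ∪ R) W := mem_SMset.1 hW
      have h3 : hardCount (Q ∪ R) W ≤ hardCount (Q ∪ R) J := by
        rw [hm]; exact le_HmaxD (mem_SMset.2 ((h1 W).1 hWP))
      have h4 := (hle_iff J W hJ hWP).2 h3
      have h5 : hardCount (P ∪ R) J ≤ HmaxD (P ∪ R) := le_HmaxD (mem_SMset.2 hJ)
      omega
  rw [prdeg_formula _ _ hX, prdeg_formula _ _ hXQ]
  have hfilter : (SMset (Q ∪ R)).filter (fun J => hardCount (Q ∪ R) J = HmaxD (Q ∪ R))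
      = (SMset (P ∪ R)).filter (fun J => hardCount (P ∪ R) J = HmaxD (P ∪ R)) := by
    ext J
    rw [Finset.mem_filter, Finset.mem_filter, hSM]
    constructor
    · rintro ⟨hJ, hJm⟩; exact ⟨hJ, (hmax_iff J (mem_SMset.1 hJ)).2 hJm⟩
    · rintro ⟨hJ, hJm⟩; exact ⟨hJ, (hmax_iff J (mem_SMset.1 hJ)).1 hJm⟩
  by_cases hXm : hardCount (P ∪ R) X = HmaxD (P ∪ R)
  · rw [if_pos hXm, if_pos ((hmax_iff X hX).1 hXm), hfilter]
    have hshift : ∀ J ∈ (SMset (P ∪ R)).filter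
        (fun J => hardCount (P ∪ R) J = HmaxD (P ∪ R)),
        softWeight (Q ∪ R) J
          = softWeight (P ∪ R) J + (softWeight (Q ∪ R) X - softWeight (P ∪ R) X) := by
      intro J hJ
      rw [Finset.mem_filter] at hJ
      have hJP : Stable (P ∪ R) J := mem_SMset.1 hJ.1
      have heq : hardCount (P ∪ R) J = hardCount (P ∪ R) X := by rw [hJ.2, hXm]
      have := (h2 J X hJP hX).2 heq
      linarith
    have hsum : ∑ J ∈ (SMset (P ∪ R)).filter
          (fun J => hardCount (P ∪ R) J = HmaxD (P ∪ R)), Real.exp (softWeight (Q ∪ R) J)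
        = Real.exp (softWeight (Q ∪ R) X - softWeight (P ∪ R) X) *
          ∑ J ∈ (SMset (P ∪ R)).filter
            (fun J => hardCount (P ∪ R) J = HmaxD (P ∪ R)), Real.exp (softWeight (P ∪ R) J) := by
      rw [Finset.mul_sum]
      refine Finset.sum_congr rfl (fun J hJ => ?_)
      rw [hshift J hJ, Real.exp_add]
      ring
    rw [hsum]
    have hnum : Real.exp (softWeight (Q ∪ R) X)
        = Real.exp (softWeight (Q ∪ R) X - softWeight (P ∪ R) X) *
          Real.exp (softWeight (P ∪ R) X) := by
      rw [← Real.exp_add]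
      congr 1
      ring
    rw [hnum, mul_div_mul_left _ _ (Real.exp_ne_zero _)]
  · rw [if_neg hXm, if_neg (fun hc => hXm ((hmax_iff X hX).2 hc))]

end Aux2

section Aux3

/-- The underlying atom of a literal. -/
def natOf : Lit → ℕ
  | .pos a => a
  | .neg a => a

def litEquiv : Lit ≃ (ℕ ⊕ ℕ) where
  toFun l := match l with | .pos a => .inl a | .neg a => .inr a
  invFun s := match s with | .inl a => .pos a | .inr a => .neg a
  left_inv l := by cases l <;> rfl
  right_inv s := by cases s <;> rfl

instance : Encodable Lit := Encodable.ofEquiv _ litEquiv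

lemma lits_subset_litset {S : Program} {wr : WRule} (h : wr ∈ S) :
    wr.r.lits ⊆ litset S := fun x hx => Finset.mem_biUnion.2 ⟨wr, h, hx⟩

lemma cond_of_p {P Q : Program} (h : PStrongEq P Q) : CondEq P Q := by
  intro R
  have hR := h R
  refine ⟨hR.1, ?_⟩
  intro X Y hX hY
  by_cases hXY : X = Y
  · subst hXY
    exact ⟨by omega, fun _ => by ring⟩
  classical
  have hX𝒮 : X ∈ SMset (P ∪ R) := mem_SMset.2 hX
  have hY𝒮 : Y ∈ SMset (P ∪ R) := mem_SMset.2 hY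
  have hPRU : P ∪ R ⊆ P ∪ Q ∪ R :=
    Finset.union_subset_union Finset.subset_union_left (Finset.Subset.refl R)
  have hQRU : Q ∪ R ⊆ P ∪ Q ∪ R :=
    Finset.union_subset_union Finset.subset_union_right (Finset.Subset.refl R)
  set L : Finset Lit := litset (P ∪ Q ∪ R) with hL
  have hsubL : ∀ I ∈ SMset (P ∪ R), I ⊆ L := by
    intro I hI
    refine (stable_subset_litset (mem_SMset.1 hI)).trans ?_
    intro x hx
    rw [litset, Finset.mem_biUnion] at hx
    obtain ⟨wr, hwr, hx⟩ := hx
    exact Finset.mem_biUnion.2 ⟨wr, hPRU hwr, hx⟩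
  have hSMQ : SMset (Q ∪ R) = SMset (P ∪ R) := by
    ext I; rw [mem_SMset, mem_SMset]; exact (hR.1 I).symm
  -- fresh literals
  set B : ℕ := (L.sup natOf) + 1 with hB
  set m : Finset Lit × ℕ → Lit := fun p => Lit.pos (B + Encodable.encode p) with hm
  have hmfresh : ∀ p, m p ∉ L := by
    intro p hc
    have h1 := Finset.le_sup (f := natOf) hc
    simp only [hm, natOf] at h1
    omega
  have hminj : Function.Injective m := by
    intro p q hpq
    simp only [hm, Lit.pos.injEq] at hpq
    exact Encodable.encode_injective (by omega)
  set 𝒮' : Finset (Finset Lit) := ((SMset (P ∪ R)).erase X).erase Y with h𝒮'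
  have h𝒮'X : ∀ Z ∈ 𝒮', Z ≠ X := by
    intro Z hZ
    rw [h𝒮'] at hZ
    exact (Finset.mem_erase.1 (Finset.mem_of_mem_erase hZ)).1
  have h𝒮'Y : ∀ Z ∈ 𝒮', Z ≠ Y := by
    intro Z hZ
    rw [h𝒮'] at hZ
    exact (Finset.mem_erase.1 hZ).1
  have h𝒮'mem : ∀ Z ∈ 𝒮', Z ∈ SMset (P ∪ R) := by
    intro Z hZ
    rw [h𝒮'] at hZ
    exact Finset.mem_of_mem_erase (Finset.mem_of_mem_erase hZ)
  set N : ℕ := 𝒮'.card with hN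
  set K : ℕ := (P ∪ Q ∪ R).card + 1 with hK
  set ρ : Finset Lit × ℕ → WRule :=
    fun p => ⟨Weight.hard, ⟨∅, p.1, (L \ p.1) ∪ {m p}⟩⟩ with hρ
  have hρinj : Function.Injective ρ := by
    intro p q hpq
    simp only [hρ, WRule.mk.injEq, Rule.mk.injEq, true_and] at hpq
    obtain ⟨h1, h2⟩ := hpq
    have hmp : m p ∈ (L \ q.1) ∪ {m q} := by
      rw [← h2]
      exact Finset.mem_union_right _ (Finset.mem_singleton_self _)
    rcases Finset.mem_union.1 hmp with hc | hc
    · exact absurd (Finset.mem_sdiff.1 hc).1 (hmfresh p)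
    · exact hminj (Finset.mem_singleton.1 hc)
  set T : Finset (Finset Lit × ℕ) := 𝒮' ×ˢ Finset.range K with hT
  set E : Program := T.image ρ with hE
  have hEhead : ∀ wr ∈ E, wr.r.head = ∅ := by
    intro wr hwr
    rw [hE] at hwr
    obtain ⟨p, -, rfl⟩ := Finset.mem_image.1 hwr
    rfl
  have hEhard : ∀ wr ∈ E, wr.w = Weight.hard := by
    intro wr hwr
    rw [hE] at hwr
    obtain ⟨p, -, rfl⟩ := Finset.mem_image.1 hwr
    rfl
  have hEdisj : Disjoint (P ∪ Q ∪ R) E := by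
    rw [Finset.disjoint_right]
    intro wr hwr hcU
    rw [hE] at hwr
    obtain ⟨p, -, rfl⟩ := Finset.mem_image.1 hwr
    have hmem : m p ∈ (ρ p).r.lits := by
      show m p ∈ (ρ p).r.head ∪ (ρ p).r.pos ∪ (ρ p).r.neg
      refine Finset.mem_union_right _ ?_
      show m p ∈ (L \ p.1) ∪ {m p}
      exact Finset.mem_union_right _ (Finset.mem_singleton_self _)
    exact hmfresh p (lits_subset_litset hcU hmem)
  have hSatρ : ∀ p : Finset Lit × ℕ, p.1 ⊆ L → ∀ I, I ⊆ L → (Sat I (ρ p).r ↔ I ≠ p.1) := by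
    intro p hp1 I hIL
    have hhead : (ρ p).r.head = ∅ := rfl
    have hpos : (ρ p).r.pos = p.1 := rfl
    have hneg : (ρ p).r.neg = (L \ p.1) ∪ {m p} := rfl
    rw [sat_of_empty_head hhead, hpos, hneg]
    constructor
    · intro hns hIeq
      apply hns
      constructor
      · rw [hIeq]
      · rw [Finset.eq_empty_iff_forall_notMem]
        intro x hx
        rw [Finset.mem_inter, Finset.mem_union] at hx
        rcases hx.1 with hx1 | hx1
        · rw [Finset.mem_sdiff] at hx1
          rw [hIeq] at hx
          exact hx1.2 hx.2
        · rw [Finset.mem_singleton] at hx1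
          subst hx1
          exact hmfresh p (hIL hx.2)
    · intro hne hc
      apply hne
      refine Finset.Subset.antisymm ?_ hc.1
      intro x hxI
      by_contra hxp
      have hxL : x ∈ L := hIL hxI
      have hmem2 : x ∈ ((L \ p.1) ∪ {m p}) ∩ I :=
        Finset.mem_inter.2 ⟨Finset.mem_union_left _ (Finset.mem_sdiff.2 ⟨hxL, hxp⟩), hxI⟩
      rw [hc.2] at hmem2
      exact Finset.notMem_empty x hmem2
  have hredE : ∀ I, I ⊆ L → reduct E I = (T.filter (fun p => I ≠ p.1)).image ρ := by
    intro I hIL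
    rw [hE]
    unfold reduct
    rw [Finset.filter_image]
    congr 1
    refine Finset.filter_congr ?_
    intro p hp
    have hp' : p ∈ 𝒮' ×ˢ Finset.range K := hp
    have hp1 : p.1 ∈ 𝒮' := (Finset.mem_product.1 hp').1
    have hp1L : p.1 ⊆ L := hsubL p.1 (h𝒮'mem p.1 hp1)
    exact hSatρ p hp1L I hIL
  have hprodfilter : ∀ I : Finset Lit, T.filter (fun p => I ≠ p.1)
      = (𝒮'.filter (fun Z => I ≠ Z)) ×ˢ Finset.range K := by
    intro I
    ext p
    rw [hT]
    simp only [Finset.mem_filter, Finset.mem_product]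
    tauto
  have hcntE : ∀ I, I ⊆ L → hardCount E I = (𝒮'.filter (fun Z => I ≠ Z)).card * K := by
    intro I hIL
    unfold hardCount
    have hall : ((reduct E I).filter (fun wr => wr.w = Weight.hard)) = reduct E I := by
      refine Finset.filter_true_of_mem ?_
      intro wr hwr
      exact hEhard wr (Finset.filter_subset _ _ hwr)
    rw [hall, hredE I hIL, Finset.card_image_of_injective _ hρinj, hprodfilter I,
      Finset.card_product, Finset.card_range]
  have hcntEX : hardCount E X = N * K := by
    rw [hcntE X (hsubL X hX𝒮)]
    have hfX : 𝒮'.filter (fun Z => X ≠ Z) = 𝒮' :=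
      Finset.filter_true_of_mem (fun Z hZ => Ne.symm (h𝒮'X Z hZ))
    rw [hfX]
  have hcntEY : hardCount E Y = N * K := by
    rw [hcntE Y (hsubL Y hY𝒮)]
    have hfY : 𝒮'.filter (fun Z => Y ≠ Z) = 𝒮' :=
      Finset.filter_true_of_mem (fun Z hZ => Ne.symm (h𝒮'Y Z hZ))
    rw [hfY]
  have hcntEZ : ∀ Z ∈ 𝒮', hardCount E Z = (N - 1) * K := by
    intro Z hZ
    rw [hcntE Z (hsubL Z (h𝒮'mem Z hZ))]
    have hfe : 𝒮'.filter (fun W => Z ≠ W) = 𝒮'.erase Z := by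
      ext W
      simp only [Finset.mem_filter, Finset.mem_erase]
      constructor
      · rintro ⟨h1, h2⟩; exact ⟨Ne.symm h2, h1⟩
      · rintro ⟨h1, h2⟩; exact ⟨h2, Ne.symm h1⟩
    rw [hfe, Finset.card_erase_of_mem hZ]
  -- the two promoted models dominate everything else
  have side : ∀ S : Program, S ⊆ P ∪ Q ∪ R → SMset S = SMset (P ∪ R) →
      ((0 < PrDeg (S ∪ E) X ↔ hardCount S Y ≤ hardCount S X) ∧
       (0 < PrDeg (S ∪ E) Y ↔ hardCount S X ≤ hardCount S Y) ∧
       (hardCount S X = hardCount S Y →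
         ∃ D : ℝ, 0 < D ∧ PrDeg (S ∪ E) X = Real.exp (softWeight S X) / D ∧
           PrDeg (S ∪ E) Y = Real.exp (softWeight S Y) / D)) := by
    intro S hSU hSM
    have hstX : Stable S X := mem_SMset.1 (by rw [hSM]; exact hX𝒮)
    have hstY : Stable S Y := mem_SMset.1 (by rw [hSM]; exact hY𝒮)
    have hSME : SMset (S ∪ E) = SMset (P ∪ R) := by
      ext I
      rw [mem_SMset, stable_union_emptyHeads E I hEhead, ← mem_SMset, hSM]
    have hdisjSE : Disjoint S E := Disjoint.mono_left hSU hEdisj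
    have hcS : ∀ I, hardCount (S ∪ E) I = hardCount S I + hardCount E I :=
      hardCount_union_of_disjoint hdisjSE
    have hswS : ∀ I, softWeight (S ∪ E) I = softWeight S I := softWeight_union_hard hEhard
    have hbound : ∀ Z : Finset Lit, hardCount S Z < K := by
      intro Z
      have h1 : hardCount S Z ≤ S.card := hardCount_le_card S Z
      have h2 : S.card ≤ (P ∪ Q ∪ R).card := Finset.card_le_card hSU
      omega
    have hstEX' : Stable (S ∪ E) X := (stable_union_emptyHeads E X hEhead).2 hstX
    have hstEY' : Stable (S ∪ E) Y := (stable_union_emptyHeads E Y hEhead).2 hstY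
    have hXmem : X ∈ SMset (S ∪ E) := by rw [hSME]; exact hX𝒮
    have hYmem : Y ∈ SMset (S ∪ E) := by rw [hSME]; exact hY𝒮
    have hdom : ∀ Z ∈ 𝒮', hardCount (S ∪ E) Z < hardCount (S ∪ E) X
        ∧ hardCount (S ∪ E) Z < hardCount (S ∪ E) Y := by
      intro Z hZ
      have hN1 : 1 ≤ N := by
        rw [hN]
        exact Finset.card_pos.2 ⟨Z, hZ⟩
      have hNK : N * K = (N - 1) * K + K := by
        obtain ⟨n, hn⟩ := Nat.exists_eq_add_of_le hN1
        have h1n : (1 + n) - 1 = n := by omega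
        rw [hn, h1n]
        ring
      have hbZ := hbound Z
      constructor
      · rw [hcS Z, hcS X, hcntEX, hcntEZ Z hZ, hNK]
        omega
      · rw [hcS Z, hcS Y, hcntEY, hcntEZ Z hZ, hNK]
        omega
    have hmaxX : (hardCount (S ∪ E) X = HmaxD (S ∪ E)) ↔ hardCount S Y ≤ hardCount S X := by
      constructor
      · intro hEq
        have hY' : hardCount (S ∪ E) Y ≤ HmaxD (S ∪ E) := le_HmaxD hYmem
        rw [← hEq, hcS X, hcS Y, hcntEX, hcntEY] at hY'
        omega
      · intro hle
        obtain ⟨J, hJ, hJm⟩ := exists_HmaxD (S := S ∪ E) ⟨X, hXmem⟩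
        have hJP : J ∈ SMset (P ∪ R) := by rw [← hSME]; exact hJ
        by_cases hJX : J = X
        · rw [← hJm, hJX]
        · by_cases hJY : J = Y
          · subst hJY
            have h1 : hardCount (S ∪ E) X ≤ HmaxD (S ∪ E) := le_HmaxD hXmem
            have h2 : hardCount (S ∪ E) J ≤ hardCount (S ∪ E) X := by
              rw [hcS X, hcS J, hcntEX, hcntEY]
              omega
            omega
          · have hJ𝒮' : J ∈ 𝒮' := by
              rw [h𝒮']
              exact Finset.mem_erase.2 ⟨hJY, Finset.mem_erase.2 ⟨hJX, hJP⟩⟩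
            have h1 := (hdom J hJ𝒮').1
            have h2 : hardCount (S ∪ E) X ≤ HmaxD (S ∪ E) := le_HmaxD hXmem
            omega
    have hmaxY : (hardCount (S ∪ E) Y = HmaxD (S ∪ E)) ↔ hardCount S X ≤ hardCount S Y := by
      constructor
      · intro hEq
        have hX' : hardCount (S ∪ E) X ≤ HmaxD (S ∪ E) := le_HmaxD hXmem
        rw [← hEq, hcS X, hcS Y, hcntEX, hcntEY] at hX'
        omega
      · intro hle
        obtain ⟨J, hJ, hJm⟩ := exists_HmaxD (S := S ∪ E) ⟨Y, hYmem⟩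
        have hJP : J ∈ SMset (P ∪ R) := by rw [← hSME]; exact hJ
        by_cases hJY : J = Y
        · rw [← hJm, hJY]
        · by_cases hJX : J = X
          · subst hJX
            have h1 : hardCount (S ∪ E) Y ≤ HmaxD (S ∪ E) := le_HmaxD hYmem
            have h2 : hardCount (S ∪ E) J ≤ hardCount (S ∪ E) Y := by
              rw [hcS Y, hcS J, hcntEX, hcntEY]
              omega
            omega
          · have hJ𝒮' : J ∈ 𝒮' := by
              rw [h𝒮']
              exact Finset.mem_erase.2 ⟨hJY, Finset.mem_erase.2 ⟨hJX, hJP⟩⟩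
            have h1 := (hdom J hJ𝒮').2
            have h2 : hardCount (S ∪ E) Y ≤ HmaxD (S ∪ E) := le_HmaxD hYmem
            omega
    refine ⟨(prdeg_pos_iff _ _ hstEX').trans hmaxX, (prdeg_pos_iff _ _ hstEY').trans hmaxY, ?_⟩
    intro heq
    have hXm : hardCount (S ∪ E) X = HmaxD (S ∪ E) := hmaxX.2 (le_of_eq heq.symm)
    have hYm : hardCount (S ∪ E) Y = HmaxD (S ∪ E) := hmaxY.2 (le_of_eq heq)
    refine ⟨(∑ J ∈ (SMset (S ∪ E)).filter (fun J => hardCount (S ∪ E) J = HmaxD (S ∪ E)),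
      Real.exp (softWeight (S ∪ E) J)), ?_, ?_, ?_⟩
    · exact Finset.sum_pos (fun _ _ => Real.exp_pos _)
        ⟨X, Finset.mem_filter.2 ⟨hXmem, hXm⟩⟩
    · rw [prdeg_formula _ _ hstEX', if_pos hXm, hswS X]
    · rw [prdeg_formula _ _ hstEY', if_pos hYm, hswS Y]
  obtain ⟨hpx, hpy, hps⟩ := side (P ∪ R) hPRU rfl
  obtain ⟨hqx, hqy, hqs⟩ := side (Q ∪ R) hQRU hSMQ
  have hstEXP : Stable (P ∪ (R ∪ E)) X := by
    rw [← Finset.union_assoc]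
    exact (stable_union_emptyHeads E X hEhead).2 hX
  have hstEYP : Stable (P ∪ (R ∪ E)) Y := by
    rw [← Finset.union_assoc]
    exact (stable_union_emptyHeads E Y hEhead).2 hY
  have hPQX : PrDeg ((P ∪ R) ∪ E) X = PrDeg ((Q ∪ R) ∪ E) X := by
    have h3 := (h (R ∪ E)).2 X hstEXP
    rw [← Finset.union_assoc, ← Finset.union_assoc] at h3
    exact h3
  have hPQY : PrDeg ((P ∪ R) ∪ E) Y = PrDeg ((Q ∪ R) ∪ E) Y := by
    have h3 := (h (R ∪ E)).2 Y hstEYP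
    rw [← Finset.union_assoc, ← Finset.union_assoc] at h3
    exact h3
  have c1 : hardCount (P ∪ R) Y ≤ hardCount (P ∪ R) X ↔
      hardCount (Q ∪ R) Y ≤ hardCount (Q ∪ R) X := by
    rw [← hpx, ← hqx, hPQX]
  have c2 : hardCount (P ∪ R) X ≤ hardCount (P ∪ R) Y ↔
      hardCount (Q ∪ R) X ≤ hardCount (Q ∪ R) Y := by
    rw [← hpy, ← hqy, hPQY]
  constructor
  · constructor
    · intro hlt
      have hn1 : ¬ hardCount (P ∪ R) Y ≤ hardCount (P ∪ R) X := by omega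
      have hn2 : ¬ hardCount (Q ∪ R) Y ≤ hardCount (Q ∪ R) X := fun hc => hn1 (c1.2 hc)
      omega
    · intro hlt
      have hn2 : ¬ hardCount (Q ∪ R) Y ≤ hardCount (Q ∪ R) X := by omega
      have hn1 : ¬ hardCount (P ∪ R) Y ≤ hardCount (P ∪ R) X := fun hc => hn2 (c1.1 hc)
      omega
  · intro heq
    have heq' : hardCount (Q ∪ R) X = hardCount (Q ∪ R) Y :=
      le_antisymm (c2.1 (le_of_eq heq)) (c1.1 (le_of_eq heq.symm))
    obtain ⟨DP, hDP, hPX1, hPY1⟩ := hps heq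
    obtain ⟨DQ, hDQ, hQX1, hQY1⟩ := hqs heq'
    rw [hPX1, hQX1] at hPQX
    rw [hPY1, hQY1] at hPQY
    have e1 := (div_eq_div_iff hDP.ne' hDQ.ne').1 hPQX
    have e2 := (div_eq_div_iff hDP.ne' hDQ.ne').1 hPQY
    have e4 : Real.exp (softWeight (P ∪ R) X) * Real.exp (softWeight (Q ∪ R) Y) * (DP * DQ)
        = Real.exp (softWeight (Q ∪ R) X) * Real.exp (softWeight (P ∪ R) Y) * (DP * DQ) := by
      linear_combination Real.exp (softWeight (Q ∪ R) Y) * DP * e1 -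
        Real.exp (softWeight (Q ∪ R) X) * DP * e2
    have e3 := mul_right_cancel₀ (by positivity : (DP * DQ) ≠ 0) e4
    rw [← Real.exp_add, ← Real.exp_add] at e3
    have e5 := Real.exp_eq_exp.1 e3
    linarith

end Aux3

/-- Two LPMLN programs are q-strongly equivalent if and only if they are
p-strongly equivalent. -/
theorem qStrongEq_iff_pStrongEq (P Q : Program) :
    QStrongEq P Q ↔ PStrongEq P Q :=
  ⟨fun hq => p_of_cond (cond_of_q hq), fun hp => q_of_cond (cond_of_p hp)⟩

end LPMLN
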